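/- Let S ⊆ O_n be a set of real orthogonal n×n matrices and let E be a subset of S such that the subgroup of O_n generated by S equals the subgroup generated by E, i.e. ⟨S⟩ = ⟨E⟩. Then Cl(S*) = Cl(⟨E⟩); in particular, Cl(S*) is a subgroup of O_n. -/

import Mathlib

open Matrix

section Aux

open Filter Topology

variable {n : ℕ}

/-- Entries of a unitary (orthogonal) real matrix lie in `[-1, 1]`. -/
lemma aux_entry_mem {B : Matrix (Fin n) (Fin n) ℝ}
    (hB : B ∈ Matrix.unitaryGroup (Fin n) ℝ) (i j : Fin n) :
    B i j ∈ Set.Icc (-1 : ℝ) 1 := by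
  have h2 := hB.2
  have h1 : (∑ k : Fin n, B i k * B i k) = 1 := by
    have := congr_fun (congr_fun h2 i) i
    simpa [Matrix.mul_apply, Matrix.star_apply, Matrix.one_apply] using this
  have h3 : B i j * B i j ≤ 1 := by
    rw [← h1]
    exact Finset.single_le_sum (fun k _ => mul_self_nonneg (B i k)) (Finset.mem_univ j)
  constructor <;> nlinarith

/-- The cube of matrices with entries in `[-1,1]` is compact. -/
lemma aux_cube_compact :
    IsCompact {X : Matrix (Fin n) (Fin n) ℝ | ∀ i j, X i j ∈ Set.Icc (-1 : ℝ) 1} := by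
  have : {X : Matrix (Fin n) (Fin n) ℝ | ∀ i j, X i j ∈ Set.Icc (-1 : ℝ) 1} =
      Set.pi Set.univ (fun _ : Fin n => Set.pi Set.univ
        (fun _ : Fin n => Set.Icc (-1 : ℝ) 1)) := by
    ext X
    exact ⟨fun h i _ j _ => h i j, fun h i j => h i (Set.mem_univ i) j (Set.mem_univ j)⟩
  rw [this]
  exact isCompact_univ_pi fun _ => isCompact_univ_pi fun _ => isCompact_Icc

/-- Key lemma: for an orthogonal matrix `A`, its transpose (= star) lies in the closure of
the set of powers of `A`. -/
lemma aux_star_mem_closure_pow {A : Matrix (Fin n) (Fin n) ℝ}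
    (hA : A ∈ Matrix.unitaryGroup (Fin n) ℝ) :
    star A ∈ closure (Set.range fun k : ℕ => A ^ k) := by
  set K := {X : Matrix (Fin n) (Fin n) ℝ | ∀ i j, X i j ∈ Set.Icc (-1 : ℝ) 1} with hKdef
  have hK : IsCompact K := aux_cube_compact
  haveI : FirstCountableTopology (Matrix (Fin n) (Fin n) ℝ) :=
    inferInstanceAs (FirstCountableTopology (Fin n → Fin n → ℝ))
  have hpow : ∀ k : ℕ, A ^ k ∈ K := fun k => fun i j => aux_entry_mem (pow_mem hA k) i j
  obtain ⟨L, -, φ, hφ, hconv⟩ := hK.tendsto_subseq hpow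
  -- `hconv : Tendsto ((fun k => A ^ k) ∘ φ) atTop (𝓝 L)`
  have hconv' : Tendsto (fun i => A ^ φ i) atTop (𝓝 L) := hconv
  -- L * star L = 1
  have hc : Continuous fun X : Matrix (Fin n) (Fin n) ℝ => X * star X :=
    continuous_id.matrix_mul continuous_star
  have hL1 : L * star L = 1 := by
    have h1 : Tendsto (fun i => A ^ φ i * star (A ^ φ i)) atTop (𝓝 (L * star L)) :=
      (hc.tendsto L).comp hconv'
    have h2 : (fun i => A ^ φ i * star (A ^ φ i)) = fun _ => (1 : Matrix (Fin n) (Fin n) ℝ) := by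
      funext i
      exact (pow_mem hA (φ i)).2
    rw [h2] at h1
    exact tendsto_nhds_unique h1 tendsto_const_nhds
  -- the differences of consecutive subsequence exponents, minus one
  have hsa : ∀ i : ℕ, A ^ (φ (i + 1) - φ i - 1) =
      star A * (A ^ φ (i + 1) * star (A ^ φ i)) := by
    intro i
    have h1 : φ i < φ (i + 1) := hφ (Nat.lt_succ_self i)
    set d := φ (i + 1) - φ i - 1 with hd
    have hdd : φ (i + 1) = d + 1 + φ i := by omega
    calc A ^ d = (star A * A) * A ^ d := by rw [hA.1, one_mul]
      _ = star A * A ^ (d + 1) := by rw [pow_succ', ← mul_assoc]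
      _ = star A * (A ^ (d + 1) * (A ^ φ i * star (A ^ φ i))) := by
          rw [(pow_mem hA (φ i)).2, mul_one]
      _ = star A * (A ^ φ (i + 1) * star (A ^ φ i)) := by
          rw [hdd]
          simp [pow_add, mul_assoc]
  -- the product tendsto star A
  have h2 : Tendsto (fun i => A ^ φ (i + 1)) atTop (𝓝 L) :=
    hconv'.comp (tendsto_add_atTop_nat 1)
  have h3 : Tendsto (fun i => star (A ^ φ i)) atTop (𝓝 (star L)) :=
    ((continuous_star.tendsto L).comp hconv')
  have h4 : Tendsto (fun i => A ^ φ (i + 1) * star (A ^ φ i)) atTop (𝓝 (L * star L)) :=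
    h2.mul h3
  rw [hL1] at h4
  have h5 : Tendsto (fun i => star A * (A ^ φ (i + 1) * star (A ^ φ i))) atTop
      (𝓝 (star A * 1)) := tendsto_const_nhds.mul h4
  rw [mul_one] at h5
  have h6 : Tendsto (fun i => A ^ (φ (i + 1) - φ i - 1)) atTop (𝓝 (star A)) := by
    simpa only [← hsa] using h5
  exact mem_closure_of_tendsto h6 (Filter.Eventually.of_forall fun i => ⟨_, rfl⟩)

end Aux

/-- A subset of `ℝ^{n×n}` is a subgroup of the orthogonal group `O_n` if it consists of
orthogonal matrices, contains the identity, and is closed under products and inverses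
(for orthogonal matrices, the inverse is the transpose). -/
def IsOrthSubgroup {m : Type*} [Fintype m] [DecidableEq m]
    (A : Set (Matrix m m ℝ)) : Prop :=
  A ⊆ (Matrix.orthogonalGroup m ℝ : Set (Matrix m m ℝ)) ∧
    (1 : Matrix m m ℝ) ∈ A ∧
    (∀ X ∈ A, ∀ Y ∈ A, X * Y ∈ A) ∧
    (∀ X ∈ A, Xᵀ ∈ A)

/-- The subgroup of the orthogonal group `O_n` generated by a set `E` of orthogonal
matrices, viewed as a set of matrices. -/
def orthSubgroupClosure {m : Type*} [Fintype m] [DecidableEq m]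
    (E : Set (Matrix m m ℝ)) : Set (Matrix m m ℝ) :=
  (fun u : Matrix.orthogonalGroup m ℝ => (u : Matrix m m ℝ)) ''
    (Subgroup.closure
      ((fun u : Matrix.orthogonalGroup m ℝ => (u : Matrix m m ℝ)) ⁻¹' E) :
      Set (Matrix.orthogonalGroup m ℝ))

/-- Let `S` be a set of real orthogonal `n × n` matrices and `E ⊆ S` with
`⟨S⟩ = ⟨E⟩` (subgroups of `O_n`). Then `Cl(S*) = Cl(⟨E⟩)`, and in particular `Cl(S*)` is a
subgroup of `O_n`, where `S*` is the submonoid generated by `S` and `Cl` is the Euclidean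
closure. -/
theorem closure_submonoid_eq_closure_subgroup {n : ℕ}
    (S E : Set (Matrix (Fin n) (Fin n) ℝ))
    (hS : S ⊆ (Matrix.orthogonalGroup (Fin n) ℝ : Set (Matrix (Fin n) (Fin n) ℝ)))
    (hES : E ⊆ S)
    (hgen : Subgroup.closure
        ((fun u : Matrix.orthogonalGroup (Fin n) ℝ =>
          (u : Matrix (Fin n) (Fin n) ℝ)) ⁻¹' S) =
      Subgroup.closure
        ((fun u : Matrix.orthogonalGroup (Fin n) ℝ =>
          (u : Matrix (Fin n) (Fin n) ℝ)) ⁻¹' E)) :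
    closure (Submonoid.closure S : Set (Matrix (Fin n) (Fin n) ℝ)) =
      closure (orthSubgroupClosure E) ∧
    IsOrthSubgroup (closure (Submonoid.closure S : Set (Matrix (Fin n) (Fin n) ℝ))) := by
  set C := closure (Submonoid.closure S : Set (Matrix (Fin n) (Fin n) ℝ)) with hCdef
  have hmono : (Submonoid.closure S : Set (Matrix (Fin n) (Fin n) ℝ)) ⊆
      (Matrix.orthogonalGroup (Fin n) ℝ : Set (Matrix (Fin n) (Fin n) ℝ)) := Submonoid.closure_le.2 hS
  -- closedness of the orthogonal group as a set
  have hOclosed : IsClosed (Matrix.orthogonalGroup (Fin n) ℝ : Set (Matrix (Fin n) (Fin n) ℝ)) := by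
    have heq : (Matrix.orthogonalGroup (Fin n) ℝ : Set (Matrix (Fin n) (Fin n) ℝ)) =
        (fun X : Matrix (Fin n) (Fin n) ℝ => (star X * X, X * star X)) ⁻¹' {((1 : Matrix (Fin n) (Fin n) ℝ), (1 : Matrix (Fin n) (Fin n) ℝ))} := by
      ext X
      simp only [Set.mem_preimage, Set.mem_singleton_iff, Prod.ext_iff, SetLike.mem_coe]
      exact Unitary.mem_iff
    rw [heq]
    exact isClosed_singleton.preimage
      ((continuous_star.matrix_mul continuous_id).prodMk
        (continuous_id.matrix_mul continuous_star))
  have hC_sub : C ⊆ (Matrix.orthogonalGroup (Fin n) ℝ : Set (Matrix (Fin n) (Fin n) ℝ)) :=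
    closure_minimal hmono hOclosed
  have h1C : (1 : Matrix (Fin n) (Fin n) ℝ) ∈ C := subset_closure (one_mem _)
  have hCmul : ∀ X ∈ C, ∀ Y ∈ C, X * Y ∈ C := by
    intro X hX Y hY
    exact ((Submonoid.closure S).topologicalClosure).mul_mem hX hY
  -- closure under star
  have hstar_mem : ∀ X ∈ C, star X ∈ C := by
    have h1 : ∀ A ∈ (Submonoid.closure S : Set (Matrix (Fin n) (Fin n) ℝ)), star A ∈ C := by
      intro A hA'
      have hAo : A ∈ Matrix.unitaryGroup (Fin n) ℝ := hmono hA'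
      refine closure_mono ?_ (aux_star_mem_closure_pow hAo)
      rintro _ ⟨k, rfl⟩
      exact pow_mem hA' k
    intro X hX
    have h2 : star X ∈ closure (star '' (Submonoid.closure S : Set (Matrix (Fin n) (Fin n) ℝ))) :=
      image_closure_subset_closure_image continuous_star ⟨X, hX, rfl⟩
    refine closure_minimal ?_ isClosed_closure h2
    rintro _ ⟨A, hA', rfl⟩
    exact h1 A hA'
  have hstar_eq : ∀ X : Matrix (Fin n) (Fin n) ℝ, star X = Xᵀ := by
    intro X
    ext i j
    simp [Matrix.star_apply, star_trivial]
  have htrans : ∀ X ∈ C, Xᵀ ∈ C := by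
    intro X hX
    rw [← hstar_eq]
    exact hstar_mem X hX
  -- the generated subgroup (as a set) is contained in C
  have hSubgrpS : orthSubgroupClosure S ⊆ C := by
    rintro _ ⟨u, hu, rfl⟩
    refine Subgroup.closure_induction
      (p := fun v (_ : v ∈ Subgroup.closure
        ((fun u : Matrix.orthogonalGroup (Fin n) ℝ =>
          (u : Matrix (Fin n) (Fin n) ℝ)) ⁻¹' S)) => (v : Matrix (Fin n) (Fin n) ℝ) ∈ C) ?_ ?_ ?_ ?_ hu
    · intro v hv
      exact subset_closure (Submonoid.subset_closure hv)
    · exact h1C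
    · intro x y _ _ hx hy
      exact hCmul _ hx _ hy
    · intro x _ hx
      exact hstar_mem _ hx
  -- S* ⊆ ⟨S⟩ as sets
  have hSstar_sub : (Submonoid.closure S : Set (Matrix (Fin n) (Fin n) ℝ)) ⊆ orthSubgroupClosure S := by
    intro x hx
    refine Submonoid.closure_induction
      (motive := fun y (_ : y ∈ Submonoid.closure S) => y ∈ orthSubgroupClosure S) ?_ ?_ ?_ hx
    · intro s hs
      exact ⟨⟨s, hS hs⟩, Subgroup.subset_closure hs, rfl⟩
    · exact ⟨1, one_mem _, rfl⟩
    · rintro x y _ _ ⟨u, hu, rfl⟩ ⟨v, hv, rfl⟩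
      exact ⟨u * v, mul_mem hu hv, rfl⟩
  have hE : orthSubgroupClosure E = orthSubgroupClosure S := by
    unfold orthSubgroupClosure
    rw [← hgen]
  constructor
  · apply Set.Subset.antisymm
    · rw [hE]
      exact closure_mono hSstar_sub
    · rw [hE]
      exact closure_minimal hSubgrpS isClosed_closure
  · exact ⟨hC_sub, h1C, hCmul, htrans⟩
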